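/- Let γ₁, γ₂ > 0 and let 𝐅, 𝐆 be continuous distribution functions concentrated on (0,∞) whose survival functions 𝐅̄ := 1−𝐅 and 𝐆̄ := 1−𝐆 are regularly varying at infinity with indices −1/γ₁ and −1/γ₂ respectively. Let μ_𝐅 denote the Lebesgue–Stieltjes measure of 𝐅, set p := ∫_{(0,∞)} 𝐆̄(z) dμ_𝐅(z) (assumed positive), and define F(x) := p^{−1} ∫_{(0,x]} 𝐆̄(z) dμ_𝐅(z). Then the survival function F̄ := 1−F is regularly varying at infinity with index −1/γ, where γ := γ₁γ₂/(γ₁+γ₂); that is, for every s > 0, F̄(sx)/F̄(x) → s^{−1/γ} as x → ∞. -/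

import Mathlib

open MeasureTheory Filter Set

/-- The survival function of the observed variable `X` in the random right-truncation
model is regularly varying at infinity with index `-1/γ`, where `γ = γ₁γ₂/(γ₁+γ₂)`. -/
theorem truncated_F_regularly_varying
    (γ₁ γ₂ : ℝ) (hγ₁ : 0 < γ₁) (hγ₂ : 0 < γ₂)
    (F G : StieltjesFunction ℝ)
    (hFcont : Continuous F) (hGcont : Continuous G)
    (hF0 : ∀ x ≤ (0 : ℝ), F x = 0) (hG0 : ∀ x ≤ (0 : ℝ), G x = 0)
    (hFtop : Tendsto F atTop (nhds 1)) (hGtop : Tendsto G atTop (nhds 1))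
    (hFrv : ∀ x > (0 : ℝ),
      Tendsto (fun z => (1 - F (x * z)) / (1 - F z)) atTop (nhds (x ^ (-1 / γ₁))))
    (hGrv : ∀ x > (0 : ℝ),
      Tendsto (fun z => (1 - G (x * z)) / (1 - G z)) atTop (nhds (x ^ (-1 / γ₂))))
    (p : ℝ) (hp : p = ∫ z in Set.Ioi (0 : ℝ), (1 - G z) ∂F.measure) (hppos : 0 < p)
    (Fobs : ℝ → ℝ)
    (hFobs : ∀ x, Fobs x = p⁻¹ * ∫ z in Set.Ioc (0 : ℝ) x, (1 - G z) ∂F.measure)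
    (γ : ℝ) (hγ : γ = γ₁ * γ₂ / (γ₁ + γ₂)) :
    ∀ s > (0 : ℝ),
      Tendsto (fun x => (1 - Fobs (s * x)) / (1 - Fobs x)) atTop (nhds (s ^ (-1 / γ))) := by
  set μ := F.measure with hμ
  set Gb : ℝ → ℝ := fun z => 1 - G z with hGb
  set Fb : ℝ → ℝ := fun z => 1 - F z with hFb
  set T : ℝ → ℝ := fun x => ∫ z in Ioi x, Gb z ∂μ with hT
  -- tendsto at bot
  have hFbot : Tendsto F atBot (nhds 0) := by
    refine Tendsto.congr' ?_ (tendsto_const_nhds (α := ℝ) (f := atBot))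
    filter_upwards [eventually_le_atBot (0:ℝ)] with x hx using (hF0 x hx).symm
  have hGbot : Tendsto G atBot (nhds 0) := by
    refine Tendsto.congr' ?_ (tendsto_const_nhds (α := ℝ) (f := atBot))
    filter_upwards [eventually_le_atBot (0:ℝ)] with x hx using (hG0 x hx).symm
  haveI : IsProbabilityMeasure μ := F.isProbabilityMeasure hFbot hFtop
  -- bounds on F, G
  have hFle1 : ∀ x, F x ≤ 1 := fun x => Monotone.ge_of_tendsto F.mono hFtop x
  have hGle1 : ∀ x, G x ≤ 1 := fun x => Monotone.ge_of_tendsto G.mono hGtop x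
  have hGb_nonneg : ∀ x, 0 ≤ Gb x := fun x => by simp [hGb, hGle1 x]
  have hGb_le1 : ∀ x, Gb x ≤ 1 := fun x => by
    have : 0 ≤ G x := by
      rcases le_or_gt x 0 with h | h
      · simp [hG0 x h]
      · calc (0:ℝ) = G 0 := (hG0 0 le_rfl).symm
          _ ≤ G x := G.mono h.le
    simp [hGb]; linarith
  have hGb_anti : Antitone Gb := fun a b hab => by
    simp only [hGb]; linarith [G.mono hab]
  have hFb_anti : Antitone Fb := fun a b hab => by
    simp only [hFb]; linarith [F.mono hab]
  have hGmeas : Measurable Gb := (measurable_const.sub hGcont.measurable)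
  have hGint : ∀ s : Set ℝ, IntegrableOn Gb s μ := by
    intro s
    refine Integrable.integrableOn ?_
    refine Integrable.mono' (integrable_const (1:ℝ)) hGmeas.aestronglyMeasurable ?_
    refine ae_of_all _ fun x => ?_
    rw [Real.norm_eq_abs, abs_of_nonneg (hGb_nonneg x)]; exact hGb_le1 x
  -- measures of intervals
  have hμIoc : ∀ a b : ℝ, a ≤ b → (μ (Ioc a b)).toReal = Fb a - Fb b := by
    intro a b hab
    rw [hμ, F.measure_Ioc, ENNReal.toReal_ofReal (by linarith [F.mono hab])]
    simp only [hFb]; ring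
  have hμIoi : ∀ b : ℝ, (μ (Ioi b)).toReal = Fb b := by
    intro b
    have : μ (Ioi b) = ENNReal.ofReal (1 - F b) := by
      have h1 : μ (Iic b) = ENNReal.ofReal (F b - 0) := F.measure_Iic hFbot b
      have h2 : μ (Iic b) + μ (Ioi b) = 1 := by
        rw [← measure_union (Set.Iic_disjoint_Ioi le_rfl) measurableSet_Ioi,
          Set.Iic_union_Ioi, measure_univ]
      have hFb0 : (0:ℝ) ≤ F b := by
        rcases le_or_gt b 0 with h | h
        · simp [hF0 b h]
        · calc (0:ℝ) = F 0 := (hF0 0 le_rfl).symm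
            _ ≤ F b := F.mono h.le
      rw [h1] at h2
      have : ENNReal.ofReal (F b - 0) + ENNReal.ofReal (1 - F b) = 1 := by
        rw [← ENNReal.ofReal_add (by linarith) (by linarith [hFle1 b])]
        norm_num
      rw [← this] at h2
      exact (ENNReal.add_right_inj (by simp)).mp h2
    rw [this, ENNReal.toReal_ofReal (by linarith [hFle1 b])]
  -- limits of survival functions
  have hFbto0 : Tendsto Fb atTop (nhds 0) := by
    have := (tendsto_const_nhds (α := ℝ) (f := atTop) (x := (1:ℝ))).sub hFtop
    simpa [hFb] using this
  have hGbto0 : Tendsto Gb atTop (nhds 0) := by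
    have := (tendsto_const_nhds (α := ℝ) (f := atTop) (x := (1:ℝ))).sub hGtop
    simpa [hGb] using this
  have hFb_nonneg : ∀ x, 0 ≤ Fb x := fun x => by
    simp only [hFb, sub_nonneg]; exact hFle1 x
  -- splitting of T
  have hT_split : ∀ a b : ℝ, a ≤ b → T a = (∫ z in Ioc a b, Gb z ∂μ) + T b := by
    intro a b hab
    simp only [hT]
    rw [← setIntegral_union (Set.Ioc_disjoint_Ioi le_rfl) measurableSet_Ioi (hGint _) (hGint _),
      Set.Ioc_union_Ioi_eq_Ioi hab]
  have hIoc_le : ∀ a b : ℝ, a ≤ b → (∫ z in Ioc a b, Gb z ∂μ) ≤ Gb a * (Fb a - Fb b) := by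
    intro a b hab
    have h := setIntegral_mono_on (hGint (Ioc a b))
      (integrableOn_const (measure_lt_top μ _).ne) measurableSet_Ioc
      (fun x hx => hGb_anti hx.1.le)
    rwa [setIntegral_const, smul_eq_mul, measureReal_def, hμIoc a b hab, mul_comm] at h
  have hIoc_ge : ∀ a b : ℝ, a ≤ b → Gb b * (Fb a - Fb b) ≤ (∫ z in Ioc a b, Gb z ∂μ) := by
    intro a b hab
    have h := setIntegral_mono_on
      (integrableOn_const (measure_lt_top μ (Ioc a b)).ne) (hGint (Ioc a b))
      measurableSet_Ioc (fun x hx => hGb_anti hx.2)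
    rwa [setIntegral_const, smul_eq_mul, measureReal_def, hμIoc a b hab, mul_comm] at h
  have hT_le : ∀ b : ℝ, T b ≤ Gb b * Fb b := by
    intro b
    have h := setIntegral_mono_on (hGint (Ioi b))
      (integrableOn_const (measure_lt_top μ _).ne) measurableSet_Ioi
      (fun x hx => hGb_anti (le_of_lt hx))
    rw [setIntegral_const, smul_eq_mul, measureReal_def, hμIoi b, mul_comm] at h
    exact h
  have hT_nonneg : ∀ x, 0 ≤ T x := fun x =>
    setIntegral_nonneg measurableSet_Ioi (fun z _ => hGb_nonneg z)
  -- positivity of survival functions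
  have hFb_pos : ∀ x, 0 < Fb x := by
    intro x
    by_contra h
    push_neg at h
    have hx0 : Fb x = 0 := le_antisymm h (hFb_nonneg x)
    have hzero : ∀ z, x ≤ z → Fb z = 0 := fun z hz =>
      le_antisymm (hx0 ▸ hFb_anti hz) (hFb_nonneg z)
    have hlim := hFrv 2 (by norm_num)
    have h2 : Tendsto (fun z => (1 - F (2*z))/(1 - F z)) atTop (nhds 0) := by
      refine Tendsto.congr' ?_ (tendsto_const_nhds (α := ℝ) (f := atTop))
      filter_upwards [eventually_ge_atTop x, eventually_ge_atTop (0:ℝ)] with z hz hz0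
      have e1 : (1 : ℝ) - F z = 0 := hzero z hz
      have e2 : (1 : ℝ) - F (2*z) = 0 := hzero (2*z) (by linarith)
      rw [e1, e2]; simp
    have heq := tendsto_nhds_unique h2 hlim
    have : (0:ℝ) < (2:ℝ)^(-1/γ₁) := Real.rpow_pos_of_pos two_pos _
    linarith
  have hGb_pos : ∀ x, 0 < Gb x := by
    intro x
    by_contra h
    push_neg at h
    have hx0 : Gb x = 0 := le_antisymm h (hGb_nonneg x)
    have hzero : ∀ z, x ≤ z → Gb z = 0 := fun z hz =>
      le_antisymm (hx0 ▸ hGb_anti hz) (hGb_nonneg z)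
    have hlim := hGrv 2 (by norm_num)
    have h2 : Tendsto (fun z => (1 - G (2*z))/(1 - G z)) atTop (nhds 0) := by
      refine Tendsto.congr' ?_ (tendsto_const_nhds (α := ℝ) (f := atTop))
      filter_upwards [eventually_ge_atTop x, eventually_ge_atTop (0:ℝ)] with z hz hz0
      have e1 : (1 : ℝ) - G z = 0 := hzero z hz
      have e2 : (1 : ℝ) - G (2*z) = 0 := hzero (2*z) (by linarith)
      rw [e1, e2]; simp
    have heq := tendsto_nhds_unique h2 hlim
    have : (0:ℝ) < (2:ℝ)^(-1/γ₂) := Real.rpow_pos_of_pos two_pos _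
    linarith
  have hT_pos : ∀ x, 0 < T x := by
    intro x
    obtain ⟨b, hb1, hb2⟩ : ∃ b, x ≤ b ∧ Fb b < Fb x :=
      ((eventually_ge_atTop x).and (hFbto0.eventually_lt_const (hFb_pos x))).exists
    have h1 := hIoc_ge x b hb1
    have h2 : 0 < Gb b * (Fb x - Fb b) :=
      mul_pos (hGb_pos b) (by linarith)
    have h3 := hT_split x b hb1
    nlinarith [hT_nonneg b]
  -- grid decomposition
  have hgrid_le : ∀ (l : ℝ), 1 ≤ l → ∀ (k : ℕ) (x : ℝ), 0 < x → l^k * x ≤ l^(k+1) * x := by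
    intro l hl k x hx
    have : l^k ≤ l^(k+1) := pow_le_pow_right₀ hl (Nat.le_succ k)
    nlinarith
  have hgrid_pos : ∀ (l : ℝ), 1 ≤ l → ∀ (k : ℕ) (x : ℝ), 0 < x → 0 < l^k * x := by
    intro l hl k x hx
    have : (0:ℝ) < l^k := pow_pos (by linarith) k
    positivity
  have hTeq : ∀ (l : ℝ), 1 ≤ l → ∀ (N : ℕ) (x : ℝ), 0 < x →
      T x = (∑ k ∈ Finset.range N, ∫ z in Ioc (l^k * x) (l^(k+1) * x), Gb z ∂μ)
        + T (l^N * x) := by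
    intro l hl N x hx
    induction N with
    | zero => simp
    | succ N ih =>
      rw [ih, Finset.sum_range_succ]
      have := hT_split (l^N * x) (l^(N+1) * x) (hgrid_le l hl N x hx)
      linarith
  have hUpper : ∀ (l : ℝ), 1 ≤ l → ∀ (N : ℕ) (x : ℝ), 0 < x →
      T x ≤ (∑ k ∈ Finset.range N, Gb (l^k * x) * (Fb (l^k * x) - Fb (l^(k+1) * x)))
        + Gb (l^N * x) * Fb (l^N * x) := by
    intro l hl N x hx
    rw [hTeq l hl N x hx]
    gcongr with k hk
    · exact hIoc_le _ _ (hgrid_le l hl k x hx)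
    · exact hT_le _
  have hLower : ∀ (l : ℝ), 1 ≤ l → ∀ (N : ℕ) (x : ℝ), 0 < x →
      (∑ k ∈ Finset.range N, Gb (l^(k+1) * x) * (Fb (l^k * x) - Fb (l^(k+1) * x)))
        ≤ T x := by
    intro l hl N x hx
    rw [hTeq l hl N x hx]
    have h1 : (∑ k ∈ Finset.range N, Gb (l^(k+1) * x) * (Fb (l^k * x) - Fb (l^(k+1) * x)))
        ≤ ∑ k ∈ Finset.range N, ∫ z in Ioc (l^k * x) (l^(k+1) * x), Gb z ∂μ := by
      gcongr with k hk
      exact hIoc_ge _ _ (hgrid_le l hl k x hx)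
    linarith [hT_nonneg (l^N * x)]
  -- the ratio function
  set R : ℝ → ℝ := fun x => T x / (Gb x * Fb x) with hR
  have hden_pos : ∀ x, 0 < Gb x * Fb x := fun x => mul_pos (hGb_pos x) (hFb_pos x)
  have hR_pos : ∀ x, 0 < R x := fun x => div_pos (hT_pos x) (hden_pos x)
  have hR_le1 : ∀ x, R x ≤ 1 := fun x =>
    (div_le_one (hden_pos x)).2 (hT_le x)
  -- ratio limits
  have hGbr : ∀ u : ℝ, 0 < u →
      Tendsto (fun x => Gb (u * x) / Gb x) atTop (nhds (u ^ (-1/γ₂))) := by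
    intro u hu; simpa [hGb] using hGrv u hu
  have hFbr : ∀ u : ℝ, 0 < u →
      Tendsto (fun x => Fb (u * x) / Fb x) atTop (nhds (u ^ (-1/γ₁))) := by
    intro u hu; simpa [hFb] using hFrv u hu
  -- limit sums
  have hΦ : ∀ (l : ℝ), 1 ≤ l → ∀ (N : ℕ),
      Tendsto (fun x => (∑ k ∈ Finset.range N,
          (Gb (l^k * x) / Gb x) * (Fb (l^k * x) / Fb x - Fb (l^(k+1) * x) / Fb x))
        + (Gb (l^N * x) / Gb x) * (Fb (l^N * x) / Fb x)) atTop
        (nhds ((∑ k ∈ Finset.range N,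
          (l^k) ^ (-1/γ₂) * ((l^k) ^ (-1/γ₁) - (l^(k+1)) ^ (-1/γ₁)))
        + (l^N) ^ (-1/γ₂) * (l^N) ^ (-1/γ₁))) := by
    intro l hl N
    have hpow : ∀ k : ℕ, (0:ℝ) < l^k := fun k => pow_pos (by linarith) k
    refine Tendsto.add (tendsto_finset_sum _ fun k _ => ?_) ?_
    · exact (hGbr _ (hpow k)).mul ((hFbr _ (hpow k)).sub (hFbr _ (hpow (k+1))))
    · exact (hGbr _ (hpow N)).mul (hFbr _ (hpow N))
  have hΨ : ∀ (l : ℝ), 1 ≤ l → ∀ (N : ℕ),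
      Tendsto (fun x => (∑ k ∈ Finset.range N,
          (Gb (l^(k+1) * x) / Gb x) * (Fb (l^k * x) / Fb x - Fb (l^(k+1) * x) / Fb x)))
        atTop
        (nhds (∑ k ∈ Finset.range N,
          (l^(k+1)) ^ (-1/γ₂) * ((l^k) ^ (-1/γ₁) - (l^(k+1)) ^ (-1/γ₁)))) := by
    intro l hl N
    have hpow : ∀ k : ℕ, (0:ℝ) < l^k := fun k => pow_pos (by linarith) k
    exact tendsto_finset_sum _ fun k _ =>
      (hGbr _ (hpow (k+1))).mul ((hFbr _ (hpow k)).sub (hFbr _ (hpow (k+1))))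
  -- pointwise comparison between R and the grid sums
  have hRleΦ : ∀ (l : ℝ), 1 ≤ l → ∀ (N : ℕ) (x : ℝ), 0 < x →
      R x ≤ (∑ k ∈ Finset.range N,
          (Gb (l^k * x) / Gb x) * (Fb (l^k * x) / Fb x - Fb (l^(k+1) * x) / Fb x))
        + (Gb (l^N * x) / Gb x) * (Fb (l^N * x) / Fb x) := by
    intro l hl N x hx
    have h := hUpper l hl N x hx
    rw [hR]
    rw [div_le_iff₀ (hden_pos x)]
    refine h.trans (le_of_eq ?_)
    have key : ∀ a b₁ b₂ c d : ℝ, c ≠ 0 → d ≠ 0 →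
        a * (b₁ - b₂) = (a/c) * (b₁/d - b₂/d) * (c*d) := by
      intro a b₁ b₂ c d hc hd; field_simp
    have key2 : ∀ a b c d : ℝ, c ≠ 0 → d ≠ 0 → a * b = (a/c) * (b/d) * (c*d) := by
      intro a b c d hc hd; field_simp
    rw [add_mul, Finset.sum_mul]
    congr 1
    · exact Finset.sum_congr rfl fun k _ =>
        key _ _ _ _ _ (ne_of_gt (hGb_pos x)) (ne_of_gt (hFb_pos x))
    · exact key2 _ _ _ _ (ne_of_gt (hGb_pos x)) (ne_of_gt (hFb_pos x))
  have hΨleR : ∀ (l : ℝ), 1 ≤ l → ∀ (N : ℕ) (x : ℝ), 0 < x →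
      (∑ k ∈ Finset.range N,
          (Gb (l^(k+1) * x) / Gb x) * (Fb (l^k * x) / Fb x - Fb (l^(k+1) * x) / Fb x))
        ≤ R x := by
    intro l hl N x hx
    have h := hLower l hl N x hx
    rw [hR, le_div_iff₀ (hden_pos x)]
    refine le_trans (le_of_eq ?_) h
    have key : ∀ a b₁ b₂ c d : ℝ, c ≠ 0 → d ≠ 0 →
        (a/c) * (b₁/d - b₂/d) * (c*d) = a * (b₁ - b₂) := by
      intro a b₁ b₂ c d hc hd; field_simp
    rw [Finset.sum_mul]
    exact Finset.sum_congr rfl fun k _ =>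
      key _ _ _ _ _ (ne_of_gt (hGb_pos x)) (ne_of_gt (hFb_pos x))
  -- limsup / liminf of R
  have hRbdd_above : IsBoundedUnder (· ≤ ·) atTop R :=
    isBoundedUnder_of ⟨1, fun x => hR_le1 x⟩
  have hRbdd_below : IsBoundedUnder (· ≥ ·) atTop R :=
    isBoundedUnder_of ⟨0, fun x => (hR_pos x).le⟩
  have hRcob_le : IsCoboundedUnder (· ≤ ·) atTop R := hRbdd_below.isCoboundedUnder_le
  have hRcob_ge : IsCoboundedUnder (· ≥ ·) atTop R := hRbdd_above.isCoboundedUnder_ge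
  have hc_le : ∀ (l : ℝ), 1 ≤ l → ∀ (N : ℕ), limsup R atTop ≤
      (∑ k ∈ Finset.range N, (l^k) ^ (-1/γ₂) * ((l^k) ^ (-1/γ₁) - (l^(k+1)) ^ (-1/γ₁)))
        + (l^N) ^ (-1/γ₂) * (l^N) ^ (-1/γ₁) := by
    intro l hl N
    have hphi := hΦ l hl N
    refine le_trans (limsup_le_limsup ?_ hRcob_le hphi.isBoundedUnder_le) ?_
    · filter_upwards [eventually_gt_atTop (0:ℝ)] with x hx using hRleΦ l hl N x hx
    · exact le_of_eq hphi.limsup_eq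
  have hd_ge : ∀ (l : ℝ), 1 ≤ l → ∀ (N : ℕ),
      (∑ k ∈ Finset.range N, (l^(k+1)) ^ (-1/γ₂) * ((l^k) ^ (-1/γ₁) - (l^(k+1)) ^ (-1/γ₁)))
        ≤ liminf R atTop := by
    intro l hl N
    have hpsi := hΨ l hl N
    refine le_trans (le_of_eq hpsi.liminf_eq.symm) ?_
    refine liminf_le_liminf ?_ hpsi.isBoundedUnder_ge hRcob_ge
    filter_upwards [eventually_gt_atTop (0:ℝ)] with x hx using hΨleR l hl N x hx
  -- algebra : U ≤ L + (1 - l^(-1/γ₂)) + tail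
  have hUL : ∀ (l : ℝ), 1 < l → ∀ (N : ℕ),
      (∑ k ∈ Finset.range N, (l^k) ^ (-1/γ₂) * ((l^k) ^ (-1/γ₁) - (l^(k+1)) ^ (-1/γ₁)))
        + (l^N) ^ (-1/γ₂) * (l^N) ^ (-1/γ₁)
      ≤ (∑ k ∈ Finset.range N, (l^(k+1)) ^ (-1/γ₂) * ((l^k) ^ (-1/γ₁) - (l^(k+1)) ^ (-1/γ₁)))
        + (1 - l ^ (-1/γ₂)) + (l^N) ^ (-1/γ₂) * (l^N) ^ (-1/γ₁) := by
    intro l hl N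
    have hl0 : (0:ℝ) < l := lt_trans one_pos hl
    have hpow1 : ∀ k : ℕ, (1:ℝ) ≤ l^k := fun k => one_le_pow₀ hl.le
    have hpowpos : ∀ k : ℕ, (0:ℝ) < l^k := fun k => pow_pos hl0 k
    have hΔnn : ∀ k : ℕ, 0 ≤ (l^k) ^ (-1/γ₁) - (l^(k+1)) ^ (-1/γ₁) := by
      intro k
      have : (l^(k+1)) ^ (-1/γ₁) ≤ (l^k) ^ (-1/γ₁) := by
        apply Real.rpow_le_rpow_of_nonpos (hpowpos k)
          (pow_le_pow_right₀ hl.le (Nat.le_succ k))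
        simp only [neg_div]; exact neg_nonpos.2 (div_pos one_pos hγ₁).le
      linarith
    have hle2 : l ^ (-1/γ₂) ≤ 1 := by
      apply Real.rpow_le_one_of_one_le_of_nonpos hl.le
      simp only [neg_div]; exact neg_nonpos.2 (div_pos one_pos hγ₂).le
    have hterm : ∀ k : ℕ,
        (l^k) ^ (-1/γ₂) * ((l^k) ^ (-1/γ₁) - (l^(k+1)) ^ (-1/γ₁))
        ≤ (l^(k+1)) ^ (-1/γ₂) * ((l^k) ^ (-1/γ₁) - (l^(k+1)) ^ (-1/γ₁))
          + (1 - l ^ (-1/γ₂)) * ((l^k) ^ (-1/γ₁) - (l^(k+1)) ^ (-1/γ₁)) := by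
      intro k
      have hmul : (l^(k+1)) ^ (-1/γ₂) = (l^k) ^ (-1/γ₂) * l ^ (-1/γ₂) := by
        rw [pow_succ, Real.mul_rpow (hpowpos k).le hl0.le]
      have h1 : (l^k) ^ (-1/γ₂) ≤ 1 := by
        apply Real.rpow_le_one_of_one_le_of_nonpos (hpow1 k)
        simp only [neg_div]; exact neg_nonpos.2 (div_pos one_pos hγ₂).le
      have h2 : (0:ℝ) ≤ (l^k) ^ (-1/γ₂) := (Real.rpow_pos_of_pos (hpowpos k) _).le
      rw [hmul]
      nlinarith [hΔnn k, mul_nonneg (mul_nonneg (sub_nonneg.2 hle2) (sub_nonneg.2 h1)) (hΔnn k)]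
    have hsum := Finset.sum_le_sum (fun k (_ : k ∈ Finset.range N) => hterm k)
    rw [Finset.sum_add_distrib] at hsum
    have htel : (∑ k ∈ Finset.range N,
        (1 - l ^ (-1/γ₂)) * ((l^k) ^ (-1/γ₁) - (l^(k+1)) ^ (-1/γ₁)))
        ≤ (1 - l ^ (-1/γ₂)) := by
      rw [← Finset.mul_sum]
      have htel2 : (∑ k ∈ Finset.range N, ((l^k) ^ (-1/γ₁) - (l^(k+1)) ^ (-1/γ₁)))
          = 1 - (l^N) ^ (-1/γ₁) := by
        rw [Finset.sum_range_sub' (fun k => (l^k) ^ (-1/γ₁))]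
        simp [Real.one_rpow]
      rw [htel2]
      have h3 : (0:ℝ) ≤ (l^N) ^ (-1/γ₁) := (Real.rpow_pos_of_pos (hpowpos N) _).le
      have h4 : (l^N) ^ (-1/γ₁) ≤ 1 := by
        apply Real.rpow_le_one_of_one_le_of_nonpos (hpow1 N)
        simp only [neg_div]; exact neg_nonpos.2 (div_pos one_pos hγ₁).le
      nlinarith
    linarith
  -- the epsilon argument
  have hclaim : ∀ ε : ℝ, 0 < ε → limsup R atTop ≤ liminf R atTop + ε := by
    intro ε hε
    obtain ⟨l, hlmem, hl2⟩ : ∃ l : ℝ, l ∈ Ioi (1:ℝ) ∧ 1 - l ^ (-1/γ₂) < ε/2 := by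
      have hcont : ContinuousAt (fun t : ℝ => t ^ (-1/γ₂)) 1 :=
        Real.continuousAt_rpow_const 1 _ (Or.inl one_ne_zero)
      have htend : Tendsto (fun t : ℝ => 1 - t ^ (-1/γ₂)) (nhdsWithin 1 (Ioi 1)) (nhds 0) := by
        have : Tendsto (fun t : ℝ => 1 - t ^ (-1/γ₂)) (nhds 1) (nhds (1 - (1:ℝ) ^ (-1/γ₂))) :=
          (tendsto_const_nhds.sub hcont.tendsto)
        rw [Real.one_rpow, sub_self] at this
        exact this.mono_left nhdsWithin_le_nhds
      have hev := htend.eventually_lt_const (show (0:ℝ) < ε/2 by linarith)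
      obtain ⟨l, hl1, hl3⟩ := (eventually_mem_nhdsWithin.and hev).exists
      exact ⟨l, hl1, hl3⟩
    rw [mem_Ioi] at hlmem
    obtain ⟨N, hN⟩ : ∃ N : ℕ, (l^N) ^ (-1/γ₂) * (l^N) ^ (-1/γ₁) < ε/2 := by
      have h1 : Tendsto (fun N : ℕ => (l:ℝ)^N) atTop atTop :=
        tendsto_pow_atTop_atTop_of_one_lt hlmem
      have h2 : Tendsto (fun t : ℝ => t ^ (-1/γ₂) * t ^ (-1/γ₁)) atTop (nhds 0) := by
        have h3 := tendsto_rpow_neg_atTop (show 0 < 1/γ₂ + 1/γ₁ by positivity)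
        refine Tendsto.congr' ?_ h3
        filter_upwards [eventually_gt_atTop (0:ℝ)] with t ht
        rw [show -(1/γ₂ + 1/γ₁) = (-1/γ₂) + (-1/γ₁) by ring, Real.rpow_add ht]
      exact ((h2.comp h1).eventually_lt_const (show (0:ℝ) < ε/2 by linarith)).exists
    have c1 := hc_le l hlmem.le N
    have c2 := hUL l hlmem N
    have c3 := hd_ge l hlmem.le N
    linarith
  have hdlec : liminf R atTop ≤ limsup R atTop := liminf_le_limsup hRbdd_above hRbdd_below
  have hceqd : limsup R atTop = liminf R atTop := by
    refine le_antisymm ?_ hdlec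
    by_contra h
    push_neg at h
    have := hclaim ((limsup R atTop - liminf R atTop)/2) (by linarith)
    linarith
  set c : ℝ := limsup R atTop with hc
  have hRtends : Tendsto R atTop (nhds c) :=
    tendsto_of_liminf_eq_limsup hceqd.symm rfl hRbdd_above hRbdd_below
  have hcpos : 0 < c := by
    have h1 := hd_ge 2 (by norm_num) 1
    have h2 : (0:ℝ) < (2:ℝ)^(1:ℕ) := by norm_num
    have h3 : ((2:ℝ)^(1:ℕ)) ^ (-1/γ₁) < 1 := by
      apply Real.rpow_lt_one_of_one_lt_of_neg (by norm_num)
      simp only [neg_div]; exact neg_lt_zero.2 (div_pos one_pos hγ₁)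
    have h4 : (0:ℝ) < ((2:ℝ)^(1:ℕ)) ^ (-1/γ₂) := Real.rpow_pos_of_pos h2 _
    have h5 : (∑ k ∈ Finset.range 1,
        ((2:ℝ)^(k+1)) ^ (-1/γ₂) * (((2:ℝ)^k) ^ (-1/γ₁) - ((2:ℝ)^(k+1)) ^ (-1/γ₁)))
        = ((2:ℝ)^(1:ℕ)) ^ (-1/γ₂) * (1 - ((2:ℝ)^(1:ℕ)) ^ (-1/γ₁)) := by
      simp [Real.one_rpow]
    rw [h5] at h1
    have h6 : (0:ℝ) < ((2:ℝ)^(1:ℕ)) ^ (-1/γ₂) * (1 - ((2:ℝ)^(1:ℕ)) ^ (-1/γ₁)) := by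
      apply mul_pos h4; linarith
    calc (0:ℝ) < _ := h6
      _ ≤ liminf R atTop := h1
      _ ≤ c := hceqd.symm.le
  -- survival function of Fobs
  have hppos' : p ≠ 0 := ne_of_gt hppos
  have hsurv : ∀ x : ℝ, 0 < x → 1 - Fobs x = p⁻¹ * T x := by
    intro x hx
    rw [hFobs x]
    have hsplit := hT_split 0 x hx.le
    have hpT : p = T 0 := hp
    have hIeq : (∫ z in Ioc (0:ℝ) x, Gb z ∂μ) = p - T x := by
      rw [hpT, hsplit]; ring
    rw [hIeq]
    field_simp
    ring
  -- final assembly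
  intro s hs
  have hkey3 : ∀ a b c a' b' c' : ℝ, a' ≠ 0 → b' ≠ 0 → c' ≠ 0 →
      (a*(b*c))/(a'*(b'*c')) = (a/a')*(b/b')*(c/c') := by
    intro a b c a' b' c' h1 h2 h3; field_simp
  have hmulatTop : Tendsto (fun x : ℝ => s * x) atTop atTop :=
    Tendsto.const_mul_atTop hs tendsto_id
  have hRs : Tendsto (fun x => R (s*x)) atTop (nhds c) := hRtends.comp hmulatTop
  have hprod : Tendsto (fun x => (R (s*x)/R x) * (Gb (s*x)/Gb x) * (Fb (s*x)/Fb x)) atTop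
      (nhds ((c/c) * (s ^ (-1/γ₂)) * (s ^ (-1/γ₁)))) :=
    ((hRs.div hRtends (ne_of_gt hcpos)).mul (hGbr s hs)).mul (hFbr s hs)
  have hcc : c / c = 1 := div_self (ne_of_gt hcpos)
  have hexp : s ^ (-1/γ) = s ^ (-1/γ₂) * s ^ (-1/γ₁) := by
    rw [← Real.rpow_add hs]
    congr 1
    rw [hγ]
    field_simp
    ring
  rw [hexp]
  have hprod' : Tendsto (fun x => (R (s*x)/R x) * (Gb (s*x)/Gb x) * (Fb (s*x)/Fb x)) atTop
      (nhds (s ^ (-1/γ₂) * s ^ (-1/γ₁))) := by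
    rw [hcc, one_mul] at hprod
    exact hprod
  refine Tendsto.congr' ?_ hprod'
  filter_upwards [eventually_gt_atTop (0:ℝ)] with x hx
  have hsx : 0 < s * x := mul_pos hs hx
  have hTr : ∀ y : ℝ, T y = R y * (Gb y * Fb y) := fun y =>
    (div_mul_cancel₀ _ (ne_of_gt (hden_pos y))).symm
  rw [hsurv _ hsx, hsurv _ hx, mul_div_mul_left _ _ (inv_ne_zero hppos'),
    hTr (s*x), hTr x,
    hkey3 _ _ _ _ _ _ (ne_of_gt (hR_pos x)) (ne_of_gt (hGb_pos x)) (ne_of_gt (hFb_pos x))]
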